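/- Let L ∈ ℝ^{n×n} be symmetric positive semidefinite, M > 0, D > 0. Then the supremum over ω ∈ ℝ \ {0} of the operator norm ‖(jω)·(−Mω² I + jDω I + L)^{-1}‖ equals 1/D. (Thus the H∞ norm of the swing dynamics with frequency output is 1/D, independent of both the inertia M and the network structure.) -/

import Mathlib

open Matrix

set_option synthInstance.maxHeartbeats 1000000
set_option maxHeartbeats 2000000

namespace SwingHinfAux

variable {n : ℕ}

/-- Core coercivity estimate: the quadratic form of `z•1 + L` has imaginary part `Dω‖x‖²`. -/
lemma aux_key (M D : ℝ) (hD : 0 < D) {L : Matrix (Fin (n+1)) (Fin (n+1)) ℝ}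
    (hL : L.IsHermitian) (ω : ℝ) (x : EuclideanSpace ℂ (Fin (n+1))) :
    D * |ω| * ‖x‖ ^ 2 ≤ ‖x‖ *
      ‖toEuclideanCLM (𝕜 := ℂ)
        (((-(M * ω ^ 2) : ℂ) + Complex.I * (D : ℂ) * (ω : ℂ)) • 1 + L.map Complex.ofReal) x‖ := by
  set z : ℂ := (-(M * ω ^ 2) : ℂ) + Complex.I * (D : ℂ) * (ω : ℂ) with hz
  set LC := L.map Complex.ofReal with hLC
  have hLCh : LC.IsHermitian := hL.map Complex.ofReal (by intro a; simp)
  set T := toEuclideanCLM (𝕜 := ℂ) (z • 1 + LC) with hT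
  set TL := toEuclideanCLM (𝕜 := ℂ) LC with hTL
  have hTx : T x = z • x + TL x := by
    rw [hT, map_add, _root_.map_smul, _root_.map_one]
    rfl
  have hsa : IsSelfAdjoint TL := hLCh.isSelfAdjoint.map (toEuclideanCLM (𝕜 := ℂ))
  have hsym := (ContinuousLinearMap.isSelfAdjoint_iff_isSymmetric).mp hsa
  have him0 : (inner ℂ x (TL x) : ℂ).im = 0 := by
    have h1 : (starRingEnd ℂ) (inner ℂ x (TL x)) = inner ℂ x (TL x) := by
      rw [inner_conj_symm]
      exact hsym x x
    exact Complex.conj_eq_iff_im.mp h1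
  have hself : (inner ℂ x x : ℂ) = Complex.ofReal (‖x‖^2) := by
    rw [inner_self_eq_norm_sq_to_K]; norm_num
  have hinner : (inner ℂ x (T x) : ℂ) = z * Complex.ofReal (‖x‖ ^ 2) + inner ℂ x (TL x) := by
    rw [hTx, inner_add_right, inner_smul_right, hself]
  have him : (inner ℂ x (T x) : ℂ).im = D * ω * ‖x‖ ^ 2 := by
    have hzim : z.im = D * ω := by simp [hz, pow_two]
    rw [hinner, Complex.add_im, him0, add_zero, Complex.mul_im]
    simp [hzim, pow_two]
  calc D * |ω| * ‖x‖ ^ 2 = |(inner ℂ x (T x) : ℂ).im| := by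
        rw [him, abs_mul, abs_mul]
        rw [_root_.abs_of_nonneg hD.le, _root_.abs_of_nonneg (sq_nonneg ‖x‖ : (0:ℝ) ≤ ‖x‖^2)]
    _ ≤ ‖(inner ℂ x (T x) : ℂ)‖ := Complex.abs_im_le_norm _
    _ = ‖(inner ℂ x (T x) : ℂ)‖ := rfl
    _ ≤ ‖x‖ * ‖T x‖ := norm_inner_le_norm x (T x)

/-- For `ω ≠ 0` the matrix `z•1 + L` is invertible. -/
lemma aux_unit (M D : ℝ) (hD : 0 < D) {L : Matrix (Fin (n+1)) (Fin (n+1)) ℝ}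
    (hL : L.IsHermitian) (ω : ℝ) (hω : ω ≠ 0) :
    IsUnit (((-(M * ω ^ 2) : ℂ) + Complex.I * (D : ℂ) * (ω : ℂ)) •
      (1 : Matrix (Fin (n+1)) (Fin (n+1)) ℂ) + L.map Complex.ofReal) := by
  set P := ((-(M * ω ^ 2) : ℂ) + Complex.I * (D : ℂ) * (ω : ℂ)) •
      (1 : Matrix (Fin (n+1)) (Fin (n+1)) ℂ) + L.map Complex.ofReal with hP
  rw [Matrix.isUnit_iff_isUnit_det _, isUnit_iff_ne_zero]
  intro hdet
  obtain ⟨v, hv0, hv⟩ := (Matrix.exists_mulVec_eq_zero_iff).mpr hdet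
  set x : EuclideanSpace ℂ (Fin (n+1)) := (WithLp.equiv 2 _).symm v with hx
  have hTx : toEuclideanCLM (𝕜 := ℂ) P x = 0 := by
    rw [hx, WithLp.equiv_symm_apply, Matrix.toEuclideanCLM_toLp, hv]
    rfl
  have := aux_key M D hD hL ω x
  rw [← hP, hTx] at this
  simp only [norm_zero, mul_zero] at this
  have hxn : ‖x‖ ≠ 0 := by
    simp only [ne_eq, norm_eq_zero]
    intro h
    exact hv0 (by simpa [hx] using congrArg (WithLp.equiv 2 _) h)
  have hxpos : 0 < ‖x‖ := lt_of_le_of_ne (norm_nonneg x) (Ne.symm hxn)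
  exact absurd this (not_le.mpr (mul_pos (mul_pos hD (abs_pos.mpr hω)) (pow_pos hxpos 2)))

/-- Upper bound `1/D` for the norm at any nonzero frequency. -/
lemma aux_upper (M D : ℝ) (hD : 0 < D) {L : Matrix (Fin (n+1)) (Fin (n+1)) ℝ}
    (hL : L.IsHermitian) (ω : ℝ) (hω : ω ≠ 0) :
    ‖toEuclideanCLM (𝕜 := ℂ) ((Complex.I * (ω : ℂ)) •
      ((((-(M * ω ^ 2) : ℂ) + Complex.I * (D : ℂ) * (ω : ℂ)) • 1 +
        L.map Complex.ofReal)⁻¹))‖ ≤ 1 / D := by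
  set P := ((-(M * ω ^ 2) : ℂ) + Complex.I * (D : ℂ) * (ω : ℂ)) •
      (1 : Matrix (Fin (n+1)) (Fin (n+1)) ℂ) + L.map Complex.ofReal with hP
  have hU : IsUnit P := aux_unit M D hD hL ω hω
  have key : ∀ x : EuclideanSpace ℂ (Fin (n+1)), D * |ω| * ‖x‖ ^ 2 ≤ ‖x‖ *
      ‖toEuclideanCLM (𝕜 := ℂ) P x‖ := fun x => aux_key M D hD hL ω x
  have habs : ‖Complex.I * (ω : ℂ)‖ = |ω| := by
    rw [norm_mul, Complex.norm_I, one_mul, Complex.norm_real]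
    rfl
  rw [_root_.map_smul]
  rw [norm_smul (Complex.I * (ω:ℂ)) (toEuclideanCLM (𝕜 := ℂ) P⁻¹), habs]
  have hS : ‖toEuclideanCLM (𝕜 := ℂ) P⁻¹‖ ≤ 1 / (D * |ω|) := by
    apply ContinuousLinearMap.opNorm_le_bound _ (by positivity)
    intro y
    set x := toEuclideanCLM (𝕜 := ℂ) P⁻¹ y with hx
    have hTx : toEuclideanCLM (𝕜 := ℂ) P x = y := by
      rw [hx, ← ContinuousLinearMap.comp_apply, ← ContinuousLinearMap.mul_def,
        ← _root_.map_mul, Matrix.mul_nonsing_inv _ ((Matrix.isUnit_iff_isUnit_det _).mp hU),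
        _root_.map_one]
      rfl
    have h := key x
    rw [hTx] at h
    rcases eq_or_ne ‖x‖ 0 with h0 | h0
    · rw [h0]; positivity
    · have hxpos : 0 < ‖x‖ := lt_of_le_of_ne (norm_nonneg x) (Ne.symm h0)
      rw [pow_two, ← mul_assoc] at h
      have hkey : D * |ω| * ‖x‖ ≤ ‖y‖ :=
        le_of_mul_le_mul_right (by linarith) hxpos
      have hpos : 0 < D * |ω| := mul_pos hD (abs_pos.mpr hω)
      rw [one_div, inv_mul_eq_div, le_div_iff₀ hpos]
      linarith
  calc |ω| * ‖toEuclideanCLM (𝕜 := ℂ) P⁻¹‖ ≤ |ω| * (1 / (D * |ω|)) :=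
        mul_le_mul_of_nonneg_left hS (abs_nonneg ω)
    _ = 1 / D := by
        field_simp

/-- Lower bound from a (real) eigenvector of `L`. -/
lemma aux_lower (M D : ℝ) (hM : 0 < M) (hD : 0 < D)
    {L : Matrix (Fin (n+1)) (Fin (n+1)) ℝ} (hL : L.IsHermitian)
    (μ ε ω : ℝ) (hω : 0 < ω) (hε : 0 < ε) (hMω : M * ω ^ 2 = μ + ε)
    (v : Fin (n+1) → ℝ) (hv : v ≠ 0) (hvL : L *ᵥ v = μ • v) :
    ω / Real.sqrt (ε^2 + D^2 * ω^2) ≤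
      ‖toEuclideanCLM (𝕜 := ℂ) ((Complex.I * (ω : ℂ)) •
        ((((-(M * ω ^ 2) : ℂ) + Complex.I * (D : ℂ) * (ω : ℂ)) • 1 +
          L.map Complex.ofReal)⁻¹))‖ := by
  have hU := aux_unit M D hD hL ω hω.ne'
  set z : ℂ := (-(M * ω ^ 2) : ℂ) + Complex.I * (D : ℂ) * (ω : ℂ) with hz
  set P := z • (1 : Matrix (Fin (n+1)) (Fin (n+1)) ℂ) + L.map Complex.ofReal with hP
  set vC : Fin (n+1) → ℂ := fun i => (v i : ℂ) with hvC
  have hvC0 : vC ≠ 0 := by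
    intro h
    apply hv
    funext i
    have := congrFun h i
    simpa [hvC] using this
  have hvL' : (L.map Complex.ofReal) *ᵥ vC = (μ : ℂ) • vC := by
    funext i
    have := congrFun hvL i
    simp only [Matrix.mulVec, dotProduct, Matrix.map_apply, hvC, Pi.smul_apply,
      smul_eq_mul] at this ⊢
    have h2 := congrArg (Complex.ofReal) this
    push_cast at h2
    exact h2
  have hPv : P *ᵥ vC = (z + μ) • vC := by
    rw [hP, Matrix.add_mulVec, Matrix.smul_mulVec, Matrix.one_mulVec, hvL', add_smul]
    module
  have hzμ : z + μ ≠ 0 := by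
    intro h
    have him : (z + (μ:ℂ)).im = D * ω := by simp [hz, pow_two]
    rw [h] at him
    have : (0:ℝ) = D * ω := by simpa using him
    nlinarith [mul_pos hD hω]
  have hPinv : P⁻¹ *ᵥ vC = (z + μ)⁻¹ • vC := by
    have h1 : P⁻¹ *ᵥ (P *ᵥ vC) = vC := by
      rw [Matrix.mulVec_mulVec, Matrix.nonsing_inv_mul _ ((Matrix.isUnit_iff_isUnit_det _).mp hU),
        Matrix.one_mulVec]
    rw [hPv, Matrix.mulVec_smul] at h1
    rw [eq_comm, ← inv_smul_eq_iff₀ hzμ] at h1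
    exact h1.symm
  set x : EuclideanSpace ℂ (Fin (n+1)) := (WithLp.equiv 2 _).symm vC with hx
  have hGx : toEuclideanCLM (𝕜 := ℂ) ((Complex.I * (ω : ℂ)) • P⁻¹) x
      = ((Complex.I * (ω : ℂ)) * (z + μ)⁻¹) • x := by
    rw [_root_.map_smul, ContinuousLinearMap.smul_apply, hx,
      WithLp.equiv_symm_apply, Matrix.toEuclideanCLM_toLp, hPinv,
      WithLp.toLp_smul, mul_smul]
    module
  have hxn : 0 < ‖x‖ := by
    rw [norm_pos_iff]
    intro h
    exact hvC0 (by simpa [hx] using congrArg (WithLp.equiv 2 _) h)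
  have hle := ContinuousLinearMap.le_opNorm
    (toEuclideanCLM (𝕜 := ℂ) ((Complex.I * (ω : ℂ)) • P⁻¹)) x
  rw [hGx, norm_smul] at hle
  have hnorm : ‖(Complex.I * (ω : ℂ)) * (z + μ)⁻¹‖ ≤
      ‖toEuclideanCLM (𝕜 := ℂ) ((Complex.I * (ω : ℂ)) • P⁻¹)‖ :=
    le_of_mul_le_mul_right hle hxn
  refine le_trans (le_of_eq ?_) hnorm
  rw [norm_mul, norm_inv]
  have h1 : ‖Complex.I * (ω:ℂ)‖ = ω := by
    rw [norm_mul, Complex.norm_I, one_mul, Complex.norm_real, Real.norm_eq_abs,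
      _root_.abs_of_pos hω]
  have h2 : ‖z + (μ:ℂ)‖ = Real.sqrt (ε^2 + D^2 * ω^2) := by
    have hre : (z + (μ:ℂ)).re = -ε := by
      simp [hz, pow_two]
      nlinarith [hMω]
    have him : (z + (μ:ℂ)).im = D * ω := by simp [hz, pow_two]
    rw [Complex.norm_def, Complex.normSq_apply, hre, him]
    congr 1
    ring
  rw [h1, h2, div_eq_mul_inv]

open Filter Set in
/-- The lower-bound values tend to `1/D` as `ε → 0⁺`. -/
lemma aux_tendsto (M D μ : ℝ) (hM : 0 < M) (hD : 0 < D) (hμ : 0 ≤ μ) :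
    Tendsto (fun ε : ℝ => Real.sqrt ((μ+ε)/M) / Real.sqrt (ε^2 + D^2 * ((μ+ε)/M)))
      (nhdsWithin 0 (Set.Ioi 0)) (nhds (1/D)) := by
  have h1 : Tendsto (fun ε : ℝ => M * ε^2 / (μ+ε)) (nhdsWithin 0 (Set.Ioi 0)) (nhds 0) := by
    apply squeeze_zero' (g := fun ε : ℝ => M * ε)
    · filter_upwards [self_mem_nhdsWithin] with ε hε
      have hε' : (0:ℝ) < ε := hε
      positivity
    · filter_upwards [self_mem_nhdsWithin] with ε hε
      have hε' : (0:ℝ) < ε := hε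
      rw [div_le_iff₀ (by linarith)]
      nlinarith [mul_nonneg (mul_nonneg hM.le hε'.le) hμ]
    · have : Tendsto (fun ε : ℝ => M * ε) (nhds 0) (nhds (M * 0)) :=
        (continuous_const.mul continuous_id).tendsto 0
      simpa using this.mono_left nhdsWithin_le_nhds
  have h2 : Tendsto (fun t : ℝ => 1 / Real.sqrt (t + D^2)) (nhds 0) (nhds (1/D)) := by
    have hc : ContinuousAt (fun t : ℝ => 1 / Real.sqrt (t + D^2)) 0 := by
      apply ContinuousAt.div continuousAt_const
      · exact (Real.continuous_sqrt.continuousAt).comp (by fun_prop)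
      · simp only [zero_add]
        rw [Real.sqrt_sq hD.le]
        exact hD.ne'
    have := hc.tendsto
    simpa [Real.sqrt_sq hD.le] using this
  have h3 := h2.comp h1
  apply h3.congr'
  filter_upwards [self_mem_nhdsWithin] with ε hε
  have hε' : (0:ℝ) < ε := hε
  set a : ℝ := (μ+ε)/M with ha
  have hapos : 0 < a := div_pos (by linarith) hM
  have hkey : ε^2 + D^2 * a = a * (M * ε^2 / (μ+ε) + D^2) := by
    rw [ha]
    field_simp
  simp only [Function.comp_apply]
  rw [hkey, Real.sqrt_mul hapos.le]
  have hsa : Real.sqrt a ≠ 0 := (Real.sqrt_ne_zero'.mpr hapos)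
  have hsX : Real.sqrt (M * ε ^ 2 / (μ + ε) + D ^ 2) ≠ 0 :=
    Real.sqrt_ne_zero'.mpr (by positivity)
  field_simp

end SwingHinfAux

open SwingHinfAux in
/-- H∞ norm of the swing dynamics with frequency output: for a symmetric
positive semidefinite Laplacian `L` (of a network with at least one
generator), `sup_{ω ≠ 0} ‖(jω)(−Mω²I + jDωI + L)⁻¹‖ = 1/D`, independent of
both the inertia `M` and the network structure. -/
theorem swing_freq_Hinf_norm (n : ℕ) (M D : ℝ) (hM : 0 < M) (hD : 0 < D)
    (L : Matrix (Fin (n + 1)) (Fin (n + 1)) ℝ) (hL : L.PosSemidef) :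
    (⨆ ω : {ω : ℝ // ω ≠ 0},
      ‖Matrix.toEuclideanCLM (𝕜 := ℂ)
          ((Complex.I * ((ω : ℝ) : ℂ)) •
            (((-(M * (ω : ℝ) ^ 2) : ℂ) + Complex.I * (D : ℂ) * ((ω : ℝ) : ℂ)) •
                (1 : Matrix (Fin (n + 1)) (Fin (n + 1)) ℂ) +
              L.map Complex.ofReal)⁻¹)‖) = 1 / D := by
  haveI : Nonempty {ω : ℝ // ω ≠ 0} := ⟨⟨1, one_ne_zero⟩⟩
  set f : {ω : ℝ // ω ≠ 0} → ℝ := fun ω =>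
    ‖Matrix.toEuclideanCLM (𝕜 := ℂ)
        ((Complex.I * ((ω : ℝ) : ℂ)) •
          (((-(M * (ω : ℝ) ^ 2) : ℂ) + Complex.I * (D : ℂ) * ((ω : ℝ) : ℂ)) •
              (1 : Matrix (Fin (n + 1)) (Fin (n + 1)) ℂ) +
            L.map Complex.ofReal)⁻¹)‖ with hf
  have hub : ∀ p : {ω : ℝ // ω ≠ 0}, f p ≤ 1 / D := fun p =>
    aux_upper M D hD hL.1 (p : ℝ) p.2
  have hbdd : BddAbove (Set.range f) := ⟨1 / D, by rintro _ ⟨p, rfl⟩; exact hub p⟩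
  refine le_antisymm (ciSup_le hub) ?_
  -- lower bound via an eigenvector of L
  set μ : ℝ := hL.1.eigenvalues 0 with hμdef
  have hμ : 0 ≤ μ := hL.eigenvalues_nonneg 0
  set v : Fin (n+1) → ℝ := ⇑(hL.1.eigenvectorBasis 0) with hv
  have hv0 : v ≠ 0 := by
    intro h
    exact hL.1.eigenvectorBasis.orthonormal.ne_zero 0 (by ext i; exact congrFun h i)
  have hvL : L *ᵥ v = μ • v := hL.1.mulVec_eigenvectorBasis 0
  have hglesup : ∀ ε : ℝ, 0 < ε →
      Real.sqrt ((μ+ε)/M) / Real.sqrt (ε^2 + D^2 * ((μ+ε)/M)) ≤ ⨆ p, f p := by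
    intro ε hε
    set ω : ℝ := Real.sqrt ((μ+ε)/M) with hωdef
    have hωpos : 0 < ω := Real.sqrt_pos.mpr (div_pos (by linarith) hM)
    have hω2 : ω ^ 2 = (μ+ε)/M := Real.sq_sqrt (le_of_lt (div_pos (by linarith) hM))
    have hMω : M * ω ^ 2 = μ + ε := by
      rw [hω2]
      field_simp
    have hlow := aux_lower M D hM hD hL.1 μ ε ω hωpos hε hMω v hv0 hvL
    have hle2 : f ⟨ω, hωpos.ne'⟩ ≤ ⨆ p, f p := le_ciSup hbdd ⟨ω, hωpos.ne'⟩
    calc Real.sqrt ((μ+ε)/M) / Real.sqrt (ε^2 + D^2 * ((μ+ε)/M))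
        = ω / Real.sqrt (ε^2 + D^2 * ω^2) := by rw [hω2]
      _ ≤ f ⟨ω, hωpos.ne'⟩ := hlow
      _ ≤ ⨆ p, f p := hle2
  have hT := aux_tendsto M D μ hM hD hμ
  refine le_of_tendsto hT ?_
  filter_upwards [self_mem_nhdsWithin] with ε hε
  exact hglesup ε hε
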